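/- Let F = (F₀, F₁) and A = (A₀, A₁) be Banach couples and suppose the sum space Σ_A = A₀ + A₁ is finite dimensional. Fix f ∈ F₀ + F₁ and a ∈ A₀ + A₁, and suppose the class 𝒯 of all bounded couple maps T : F → A satisfying Tf = a is nonempty. Then there exists S ∈ 𝒯 such that ‖S‖_{F→A} = inf{‖T‖_{F→A} : T ∈ 𝒯}. -/
import Mathlib
open Filter Topology


/-- A Banach couple: two Banach spaces `A0`, `A1` injectively and continuously embedded
into a normed space `S`, whose images span `S`. -/
structure BanachCouple where
  S : Type
  [normS : NormedAddCommGroup S]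
  [modS : NormedSpace ℝ S]
  A0 : Type
  [normA0 : NormedAddCommGroup A0]
  [modA0 : NormedSpace ℝ A0]
  [compA0 : CompleteSpace A0]
  A1 : Type
  [normA1 : NormedAddCommGroup A1]
  [modA1 : NormedSpace ℝ A1]
  [compA1 : CompleteSpace A1]
  i0 : A0 →L[ℝ] S
  i1 : A1 →L[ℝ] S
  inj0 : Function.Injective i0
  inj1 : Function.Injective i1
  spans : ∀ x : S, ∃ (a0 : A0) (a1 : A1), x = i0 a0 + i1 a1

attribute [instance] BanachCouple.normS BanachCouple.modS BanachCouple.normA0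
  BanachCouple.modA0 BanachCouple.compA0 BanachCouple.normA1 BanachCouple.modA1
  BanachCouple.compA1

/-- `T : Σ_A → Σ_B` is a couple map with components `T0`, `T1`. -/
def IsCoupleMapWith (A B : BanachCouple) (T : A.S →ₗ[ℝ] B.S)
    (T0 : A.A0 →L[ℝ] B.A0) (T1 : A.A1 →L[ℝ] B.A1) : Prop :=
  (∀ a : A.A0, T (A.i0 a) = B.i0 (T0 a)) ∧ (∀ a : A.A1, T (A.i1 a) = B.i1 (T1 a))

/-- `T : Σ_A → Σ_B` is a (bounded) couple map. -/
def IsCoupleMap (A B : BanachCouple) (T : A.S →ₗ[ℝ] B.S) : Prop :=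
  ∃ T0 T1, IsCoupleMapWith A B T T0 T1

/-- The couple norm `max(‖T₀‖, ‖T₁‖)` of a couple map (the components are unique,
so this infimum is over a singleton). -/
noncomputable def coupleNorm (A B : BanachCouple) (T : A.S →ₗ[ℝ] B.S) : ℝ :=
  sInf {r : ℝ | ∃ T0 T1, IsCoupleMapWith A B T T0 T1 ∧ r = max ‖T0‖ ‖T1‖}

lemma coupleNorm_eq (A B : BanachCouple) (T : A.S →ₗ[ℝ] B.S)
    (T0 : A.A0 →L[ℝ] B.A0) (T1 : A.A1 →L[ℝ] B.A1)
    (h : IsCoupleMapWith A B T T0 T1) :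
    coupleNorm A B T = max ‖T0‖ ‖T1‖ := by
  have : {r : ℝ | ∃ T0' T1', IsCoupleMapWith A B T T0' T1' ∧ r = max ‖T0'‖ ‖T1'‖}
      = {max ‖T0‖ ‖T1‖} := by
    ext r
    simp only [Set.mem_setOf_eq, Set.mem_singleton_iff]
    constructor
    · rintro ⟨T0', T1', h', rfl⟩
      have e0 : T0' = T0 := by
        ext x; exact B.inj0 (by rw [← h'.1 x, h.1 x])
      have e1 : T1' = T1 := by
        ext x; exact B.inj1 (by rw [← h'.2 x, h.2 x])
      rw [e0, e1]
    · rintro rfl; exact ⟨T0, T1, h, rfl⟩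
  rw [coupleNorm, this, csInf_singleton]

lemma exists_ultralim {E : Type*} [NormedAddCommGroup E] [NormedSpace ℝ E]
    [FiniteDimensional ℝ E] (U : Ultrafilter ℕ) (g : ℕ → E) (C : ℝ)
    (h : ∀ n, ‖g n‖ ≤ C) : ∃ x, Tendsto g U (𝓝 x) := by
  haveI : ProperSpace E := FiniteDimensional.proper ℝ E
  have hc : IsCompact (Metric.closedBall (0:E) C) := isCompact_closedBall _ _
  have hle : ↑(U.map g) ≤ Filter.principal (Metric.closedBall (0:E) C) := by
    rw [Filter.le_principal_iff]
    have : g ⁻¹' (Metric.closedBall (0:E) C) = Set.univ := by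
      ext n; simp [mem_closedBall_zero_iff.mpr (h n)]
    simp [Ultrafilter.mem_map, this]
  obtain ⟨x, -, hx⟩ := hc.ultrafilter_le_nhds (U.map g) hle
  exact ⟨x, hx⟩

/-- If the sum space of `A` is finite dimensional and the class of couple maps `T : F → A`
with `T f = a` is nonempty, then it contains a norm-minimizing element. -/
theorem exists_norm_minimizing_coupleMap (F A : BanachCouple)
    (hfd : FiniteDimensional ℝ A.S) (f : F.S) (a : A.S)
    (hne : ∃ T : F.S →ₗ[ℝ] A.S, IsCoupleMap F A T ∧ T f = a) :
    ∃ S : F.S →ₗ[ℝ] A.S, IsCoupleMap F A S ∧ S f = a ∧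
      coupleNorm F A S =
        sInf {r : ℝ | ∃ T : F.S →ₗ[ℝ] A.S, IsCoupleMap F A T ∧ T f = a ∧
          r = coupleNorm F A T} := by
  classical
  haveI : FiniteDimensional ℝ A.A0 :=
    FiniteDimensional.of_injective (A.i0 : A.A0 →ₗ[ℝ] A.S) A.inj0
  haveI : FiniteDimensional ℝ A.A1 :=
    FiniteDimensional.of_injective (A.i1 : A.A1 →ₗ[ℝ] A.S) A.inj1
  set Rset := {r : ℝ | ∃ T : F.S →ₗ[ℝ] A.S, IsCoupleMap F A T ∧ T f = a ∧
      r = coupleNorm F A T} with hRset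
  have hRne : Rset.Nonempty := by
    obtain ⟨T, hT, hTf⟩ := hne
    exact ⟨coupleNorm F A T, T, hT, hTf, rfl⟩
  have hRnonneg : ∀ r ∈ Rset, 0 ≤ r := by
    rintro r ⟨T, ⟨T0, T1, hTw⟩, -, rfl⟩
    rw [coupleNorm_eq F A T T0 T1 hTw]
    exact le_trans (norm_nonneg T0) (le_max_left _ _)
  set m := sInf Rset with hm
  have hm0 : 0 ≤ m := Real.sInf_nonneg hRnonneg
  -- choose minimizing sequence
  have hseq : ∀ n : ℕ, ∃ T : F.S →ₗ[ℝ] A.S,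
      ∃ T0 T1, IsCoupleMapWith F A T T0 T1 ∧ T f = a ∧
        max ‖T0‖ ‖T1‖ < m + 1 / (n + 1) := by
    intro n
    have hpos : (0:ℝ) < 1 / (n + 1) := by positivity
    obtain ⟨r, hr, hlt⟩ := Real.lt_sInf_add_pos hRne hpos
    obtain ⟨T, ⟨T0, T1, hTw⟩, hTf, rfl⟩ := hr
    rw [coupleNorm_eq F A T T0 T1 hTw] at hlt
    exact ⟨T, T0, T1, hTw, hTf, hlt⟩
  choose T T0 T1 hTw hTf hTlt using hseq
  have hbnd0 : ∀ n, ‖T0 n‖ ≤ m + 1 := fun n =>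
    le_trans (le_trans (le_max_left _ _) (hTlt n).le)
      (by have : (1:ℝ) / (n + 1) ≤ 1 := by
            rw [div_le_one (by positivity)]; linarith [Nat.cast_nonneg (α := ℝ) n]
          linarith)
  have hbnd1 : ∀ n, ‖T1 n‖ ≤ m + 1 := fun n =>
    le_trans (le_trans (le_max_right _ _) (hTlt n).le)
      (by have : (1:ℝ) / (n + 1) ≤ 1 := by
            rw [div_le_one (by positivity)]; linarith [Nat.cast_nonneg (α := ℝ) n]
          linarith)
  set U : Ultrafilter ℕ := Ultrafilter.of atTop with hU
  have hUle : (U : Filter ℕ) ≤ atTop := Ultrafilter.of_le _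
  -- limits of components
  have h0 : ∀ x : F.A0, ∃ y : A.A0, Tendsto (fun n => T0 n x) U (𝓝 y) := by
    intro x
    exact exists_ultralim U _ ((m + 1) * ‖x‖) fun n =>
      le_trans ((T0 n).le_opNorm x) (by
        exact mul_le_mul_of_nonneg_right (hbnd0 n) (norm_nonneg x))
  have h1 : ∀ x : F.A1, ∃ y : A.A1, Tendsto (fun n => T1 n x) U (𝓝 y) := by
    intro x
    exact exists_ultralim U _ ((m + 1) * ‖x‖) fun n =>
      le_trans ((T1 n).le_opNorm x) (by
        exact mul_le_mul_of_nonneg_right (hbnd1 n) (norm_nonneg x))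
  choose S0f hS0f using h0
  choose S1f hS1f using h1
  -- limit on the sum space
  have hS : ∀ s : F.S, ∃ y : A.S, Tendsto (fun n => T n s) U (𝓝 y) := by
    intro s
    obtain ⟨x, y, rfl⟩ := F.spans s
    refine exists_ultralim U _ (‖A.i0‖ * ((m + 1) * ‖x‖) + ‖A.i1‖ * ((m + 1) * ‖y‖))
      fun n => ?_
    have he : T n (F.i0 x + F.i1 y) = A.i0 (T0 n x) + A.i1 (T1 n y) := by
      rw [map_add, (hTw n).1 x, (hTw n).2 y]
    rw [he]
    refine le_trans (norm_add_le _ _) (add_le_add ?_ ?_)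
    · exact le_trans ((A.i0).le_opNorm _) (mul_le_mul_of_nonneg_left
        (le_trans ((T0 n).le_opNorm x)
          (mul_le_mul_of_nonneg_right (hbnd0 n) (norm_nonneg x))) (norm_nonneg _))
    · exact le_trans ((A.i1).le_opNorm _) (mul_le_mul_of_nonneg_left
        (le_trans ((T1 n).le_opNorm y)
          (mul_le_mul_of_nonneg_right (hbnd1 n) (norm_nonneg y))) (norm_nonneg _))
  choose Sf hSf using hS
  haveI : (U : Filter ℕ).NeBot := Ultrafilter.neBot U
  -- Sf is linear
  have Sadd : ∀ s t : F.S, Sf (s + t) = Sf s + Sf t := by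
    intro s t
    refine tendsto_nhds_unique ?_ ((hSf s).add (hSf t))
    have : (fun n => T n (s + t)) = fun n => T n s + T n t := by
      funext n; rw [map_add]
    rw [← this]; exact hSf (s + t)
  have Ssmul : ∀ (c : ℝ) (s : F.S), Sf (c • s) = c • Sf s := by
    intro c s
    refine tendsto_nhds_unique ?_ ((hSf s).const_smul c)
    have : (fun n => T n (c • s)) = fun n => c • T n s := by
      funext n; rw [map_smul]
    rw [← this]; exact hSf (c • s)
  set Slin : F.S →ₗ[ℝ] A.S :=
    { toFun := Sf, map_add' := Sadd, map_smul' := Ssmul } with hSlin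
  -- norm bound on limit components
  have hnb0 : ∀ x : F.A0, ‖S0f x‖ ≤ m * ‖x‖ := by
    intro x
    have h1' : Tendsto (fun n => ‖T0 n x‖) U (𝓝 ‖S0f x‖) := (hS0f x).norm
    have h2 : Tendsto (fun n : ℕ => (m + 1 / (n + 1)) * ‖x‖) (U : Filter ℕ)
        (𝓝 (m * ‖x‖)) := by
      refine Tendsto.mono_left ?_ hUle
      have := (tendsto_one_div_add_atTop_nhds_zero_nat.const_add m).mul_const ‖x‖
      simpa using this
    refine le_of_tendsto_of_tendsto' h1' h2 fun n => ?_
    exact le_trans ((T0 n).le_opNorm x) (mul_le_mul_of_nonneg_right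
      (le_trans (le_max_left _ _) (hTlt n).le) (norm_nonneg x))
  have hnb1 : ∀ x : F.A1, ‖S1f x‖ ≤ m * ‖x‖ := by
    intro x
    have h1' : Tendsto (fun n => ‖T1 n x‖) U (𝓝 ‖S1f x‖) := (hS1f x).norm
    have h2 : Tendsto (fun n : ℕ => (m + 1 / (n + 1)) * ‖x‖) (U : Filter ℕ)
        (𝓝 (m * ‖x‖)) := by
      refine Tendsto.mono_left ?_ hUle
      have := (tendsto_one_div_add_atTop_nhds_zero_nat.const_add m).mul_const ‖x‖
      simpa using this
    refine le_of_tendsto_of_tendsto' h1' h2 fun n => ?_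
    exact le_trans ((T1 n).le_opNorm x) (mul_le_mul_of_nonneg_right
      (le_trans (le_max_right _ _) (hTlt n).le) (norm_nonneg x))
  -- component linear maps
  have S0add : ∀ x y : F.A0, S0f (x + y) = S0f x + S0f y := by
    intro x y
    refine tendsto_nhds_unique ?_ ((hS0f x).add (hS0f y))
    have : (fun n => T0 n (x + y)) = fun n => T0 n x + T0 n y := by
      funext n; rw [map_add]
    rw [← this]; exact hS0f (x + y)
  have S0smul : ∀ (c : ℝ) (x : F.A0), S0f (c • x) = c • S0f x := by
    intro c x
    refine tendsto_nhds_unique ?_ ((hS0f x).const_smul c)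
    have : (fun n => T0 n (c • x)) = fun n => c • T0 n x := by
      funext n; rw [map_smul]
    rw [← this]; exact hS0f (c • x)
  have S1add : ∀ x y : F.A1, S1f (x + y) = S1f x + S1f y := by
    intro x y
    refine tendsto_nhds_unique ?_ ((hS1f x).add (hS1f y))
    have : (fun n => T1 n (x + y)) = fun n => T1 n x + T1 n y := by
      funext n; rw [map_add]
    rw [← this]; exact hS1f (x + y)
  have S1smul : ∀ (c : ℝ) (x : F.A1), S1f (c • x) = c • S1f x := by
    intro c x
    refine tendsto_nhds_unique ?_ ((hS1f x).const_smul c)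
    have : (fun n => T1 n (c • x)) = fun n => c • T1 n x := by
      funext n; rw [map_smul]
    rw [← this]; exact hS1f (c • x)
  set S0c : F.A0 →L[ℝ] A.A0 :=
    LinearMap.mkContinuous
      { toFun := S0f, map_add' := S0add, map_smul' := S0smul } m hnb0 with hS0c
  set S1c : F.A1 →L[ℝ] A.A1 :=
    LinearMap.mkContinuous
      { toFun := S1f, map_add' := S1add, map_smul' := S1smul } m hnb1 with hS1c
  have hS0norm : ‖S0c‖ ≤ m := LinearMap.mkContinuous_norm_le _ hm0 _
  have hS1norm : ‖S1c‖ ≤ m := LinearMap.mkContinuous_norm_le _ hm0 _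
  -- couple map property
  have hSw : IsCoupleMapWith F A Slin S0c S1c := by
    constructor
    · intro x
      have key : Tendsto (fun n => T n (F.i0 x)) U (𝓝 (A.i0 (S0f x))) := by
        have he : (fun n => T n (F.i0 x)) = fun n => A.i0 (T0 n x) :=
          funext fun n => (hTw n).1 x
        rw [he]
        exact ((A.i0).continuous.tendsto _).comp (hS0f x)
      exact tendsto_nhds_unique (hSf (F.i0 x)) key
    · intro x
      have key : Tendsto (fun n => T n (F.i1 x)) U (𝓝 (A.i1 (S1f x))) := by
        have he : (fun n => T n (F.i1 x)) = fun n => A.i1 (T1 n x) :=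
          funext fun n => (hTw n).2 x
        rw [he]
        exact ((A.i1).continuous.tendsto _).comp (hS1f x)
      exact tendsto_nhds_unique (hSf (F.i1 x)) key
  have hSfa : Slin f = a := by
    have key : Tendsto (fun n => T n f) U (𝓝 a) := by
      have he : (fun n => T n f) = fun _ => a := funext hTf
      rw [he]; exact tendsto_const_nhds
    exact tendsto_nhds_unique (hSf f) key
  refine ⟨Slin, ⟨S0c, S1c, hSw⟩, hSfa, ?_⟩
  have hcn : coupleNorm F A Slin = max ‖S0c‖ ‖S1c‖ := coupleNorm_eq F A Slin S0c S1c hSw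
  have hle1 : coupleNorm F A Slin ≤ m := by
    rw [hcn]; exact max_le hS0norm hS1norm
  have hle2 : m ≤ coupleNorm F A Slin :=
    csInf_le ⟨0, fun r hr => hRnonneg r hr⟩ ⟨Slin, ⟨S0c, S1c, hSw⟩, hSfa, rfl⟩
  exact le_antisymm hle1 hle2
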